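/- arXiv:2310.01793 — 2 statements merged into one kernel-verified Lean document; each statement's English description precedes it below -/
import Mathlib

section
/- Let Q₄ₙ = ⟨a, b | aⁿ = b², a^{2n} = e, b⁻¹ab = a⁻¹⟩ be the generalized quaternion group of order 4n ≥ 8, and let H be a proper subgroup of Q₄ₙ. For any odd integer k with 1 ≤ k ≤ |H|, H is a (0,k)-regular set of Q₄ₙ if and only if either H = ⟨a^t⟩ with t dividing 2n and 2n/t odd, or H = ⟨a^t, a^s b⟩ with t an odd divisor of 2n and 0 ≤ s ≤ t−1. -/
open Set

/-- An `(a,b)`-regular set in a graph: a nonempty proper subset `D` of the vertex set such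
that every vertex in `D` has exactly `a` neighbours in `D` and every vertex outside `D`
has exactly `b` neighbours in `D`. -/
def IsRegularSet {V : Type*} (G : SimpleGraph V) (D : Set V) (a b : ℕ) : Prop :=
  D.Nonempty ∧ D ≠ Set.univ ∧
    (∀ v ∈ D, {u | G.Adj v u ∧ u ∈ D}.ncard = a) ∧
    (∀ v ∉ D, {u | G.Adj v u ∧ u ∈ D}.ncard = b)

/-- The Cayley graph of a group with connection set `S`: `x ~ y` iff `y * x⁻¹ ∈ S`
(stated symmetrically; when `S` is inverse-closed and `1 ∉ S` this is the usual notion). -/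
def cayley {G : Type*} [Group G] (S : Set G) : SimpleGraph G where
  Adj x y := x ≠ y ∧ y * x⁻¹ ∈ S ∧ x * y⁻¹ ∈ S
  symm := ⟨fun x y h => ⟨h.1.symm, h.2.2, h.2.1⟩⟩
  loopless := ⟨fun x h => h.1 rfl⟩

/-- `D` is a `(0,k)`-regular set of the group `G`: it is a `(0,k)`-regular set in some
Cayley graph of `G` (with inverse-closed connection set avoiding the identity). -/
def IsRegularSetOfGroup (G : Type*) [Group G] (D : Set G) (k : ℕ) : Prop :=
  ∃ S : Set G, (1 : G) ∉ S ∧ (∀ s ∈ S, s⁻¹ ∈ S) ∧ IsRegularSet (cayley S) D 0 k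

lemma even_ncard_of_involution {α : Type*} :
    ∀ (M : ℕ) (s : Set α), s.ncard = M → s.Finite → ∀ f : α → α,
    (∀ x ∈ s, f x ∈ s) → (∀ x ∈ s, f (f x) = x) → (∀ x ∈ s, f x ≠ x) → Even M := by
  intro M
  induction M using Nat.strong_induction_on with
  | _ M ih =>
    intro s hM hfin f hmem hinv hne
    rcases s.eq_empty_or_nonempty with rfl | ⟨x, hx⟩
    · rw [← hM, Set.ncard_empty]; exact Even.zero
    · have hfx : f x ∈ s := hmem x hx
      have hxne : f x ≠ x := hne x hx
      have hpair : ({x, f x} : Set α) ⊆ s := by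
        intro y hy; rcases hy with rfl | hy
        · exact hx
        · simp only [mem_singleton_iff] at hy; exact hy ▸ hfx
      have hpairc : ({x, f x} : Set α).ncard = 2 := Set.ncard_pair (Ne.symm hxne)
      have hsub : (s \ {x, f x}).ncard = M - 2 := by
        rw [Set.ncard_diff hpair ((Set.finite_singleton _).insert x), hpairc, hM]
      have hge : 2 ≤ M := by
        rw [← hM, ← hpairc]
        exact Set.ncard_le_ncard hpair hfin
      have hlt : M - 2 < M := by omega
      have heven := ih (M - 2) hlt (s \ {x, f x}) hsub hfin.diff f
        (by
          intro y hy
          obtain ⟨hys, hyn⟩ := hy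
          refine ⟨hmem y hys, ?_⟩
          intro hc
          rcases hc with hc | hc
          · apply hyn; right
            have h2 : f (f y) = f x := congrArg f hc
            rw [hinv y hys] at h2
            simp [h2]
          · simp only [mem_singleton_iff] at hc
            apply hyn; left
            have h2 := congrArg f hc
            rw [hinv y hys, hinv x hx] at h2
            exact h2)
        (fun y hy => hinv y hy.1) (fun y hy => hne y hy.1)
      obtain ⟨c, hc⟩ := heven
      exact ⟨c + 1, by omega⟩

lemma nbr_set_eq {G : Type*} [Group G] (S : Set G) (h1 : (1:G) ∉ S)
    (hinv : ∀ s ∈ S, s⁻¹ ∈ S) (D : Set G) (v : G) :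
    {u | (cayley S).Adj v u ∧ u ∈ D} = {u | u ∈ D ∧ u * v⁻¹ ∈ S} := by
  ext u
  simp only [mem_setOf_eq, cayley]
  constructor
  · rintro ⟨⟨hne, h2, h3⟩, hD⟩
    exact ⟨hD, h2⟩
  · rintro ⟨hD, h2⟩
    refine ⟨⟨?_, h2, ?_⟩, hD⟩
    · rintro rfl
      rw [mul_inv_cancel] at h2
      exact h1 h2
    · have := hinv _ h2
      rwa [mul_inv_rev, inv_inv] at this

lemma regular_iff {G : Type*} [Group G] [Fintype G] (H : Subgroup G)
    (hprop : H ≠ ⊤) (k : ℕ) :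
    IsRegularSetOfGroup G (H : Set G) k ↔
      ∃ S : Set G, (1 : G) ∉ S ∧ (∀ s ∈ S, s⁻¹ ∈ S) ∧ (∀ h ∈ H, h ∉ S) ∧
        (∀ v : G, v ∉ H → {u | u ∈ (H : Set G) ∧ u * v⁻¹ ∈ S}.ncard = k) := by
  constructor
  · rintro ⟨S, h1, hinv, hne, hnuniv, hin, hout⟩
    refine ⟨S, h1, hinv, ?_, ?_⟩
    · intro h hh hhS
      have := hin 1 H.one_mem
      rw [nbr_set_eq S h1 hinv _ 1] at this
      have hmem : h ∈ {u | u ∈ (H : Set G) ∧ u * (1:G)⁻¹ ∈ S} := by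
        simp only [inv_one, mul_one, mem_setOf_eq]
        exact ⟨hh, hhS⟩
      have hfin : {u | u ∈ (H : Set G) ∧ u * (1:G)⁻¹ ∈ S}.Finite := Set.toFinite _
      rw [Set.ncard_eq_zero hfin] at this
      rw [this] at hmem
      exact hmem
    · intro v hv
      have := hout v hv
      rwa [nbr_set_eq S h1 hinv _ v] at this
  · rintro ⟨S, h1, hinv, hdisj, hcount⟩
    refine ⟨S, h1, hinv, ⟨1, H.one_mem⟩, ?_, ?_, ?_⟩
    · intro hc
      apply hprop
      ext x
      simp only [Subgroup.mem_top, iff_true]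
      have : x ∈ (H : Set G) := hc ▸ mem_univ x
      exact this
    · intro v hv
      rw [nbr_set_eq S h1 hinv _ v]
      convert Set.ncard_empty G
      ext u
      simp only [mem_setOf_eq, mem_empty_iff_false, iff_false, not_and]
      intro hu hS
      exact hdisj _ (H.mul_mem hu (H.inv_mem hv)) hS
    · intro v hv
      rw [nbr_set_eq S h1 hinv _ v]
      exact hcount v hv

namespace Aux

lemma mod2 {A t : ℕ} (ht : 0 < t) (h : A < 2*t) : A % t = if A < t then A else A - t := by
  split_ifs with h1
  · exact Nat.mod_eq_of_lt h1
  · rw [Nat.mod_eq_sub_mod (le_of_not_gt h1), Nat.mod_eq_of_lt (by omega)]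

variable {N : ℕ} [NeZero N]

lemma valAdd' (x y : ZMod N) :
    (x + y).val = if x.val + y.val < N then x.val + y.val else x.val + y.val - N := by
  rw [ZMod.val_add, mod2 (NeZero.pos N) (by have := x.val_lt; have := y.val_lt; omega)]

lemma resAdd {t : ℕ} (htN : t ∣ N) (x y : ZMod N) :
    (x + y).val % t = (x.val % t + y.val % t) % t := by
  rw [ZMod.val_add, Nat.mod_mod_of_dvd _ htN, Nat.add_mod]

lemma lvl_lt {t m : ℕ} (hm : t * m = N) (ht : 0 < t) (x : ZMod N) : x.val / t < m := by
  rw [Nat.div_lt_iff_lt_mul ht, mul_comm]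
  have := x.val_lt
  omega

lemma negDecomp {t m : ℕ} (hm : t * m = N) (ht : 0 < t) {x : ZMod N} (hx : x.val % t ≠ 0) :
    (-x).val % t = t - x.val % t ∧ (-x).val / t = m - 1 - x.val / t := by
  have hxv := x.val_lt
  have hx0 : x ≠ 0 := by
    intro h; rw [h] at hx; simp at hx
  have hneg : (-x).val = N - x.val := by
    rw [ZMod.neg_val, if_neg hx0]
  have hdm := Nat.div_add_mod x.val t
  set q := x.val / t with hq
  set r := x.val % t with hr
  have hrt : r < t := Nat.mod_lt _ ht
  have hqm : q < m := lvl_lt hm ht x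
  have e1 : t * (m-1-q) + t*q + t = t*m := by
    have e2 : (m-1-q) + q + 1 = m := by omega
    calc t*(m-1-q) + t*q + t = t*((m-1-q)+q+1) := by ring
    _ = t*m := by rw [e2]
  have key : N - x.val = (t - r) + t * (m - 1 - q) := by omega
  constructor
  · rw [hneg, key, Nat.add_mul_mod_self_left, Nat.mod_eq_of_lt (by omega)]
  · rw [hneg, key, Nat.add_mul_div_left _ _ ht, Nat.div_eq_of_lt (by omega), zero_add]

lemma resNeg {t m : ℕ} (hm : t * m = N) (ht : 0 < t) (x : ZMod N) :
    (-x).val % t = (t - x.val % t) % t := by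
  by_cases hx : x.val % t = 0
  · rw [hx, Nat.sub_zero, Nat.mod_self]
    by_cases hx0 : x = 0
    · simp [hx0]
    · rw [ZMod.neg_val, if_neg hx0]
      have h1 : t ∣ N := ⟨m, hm.symm⟩
      have h2 : t ∣ N - x.val := Nat.dvd_sub h1 (Nat.dvd_of_mod_eq_zero hx)
      exact Nat.eq_zero_of_dvd_of_lt h2 |> fun _ => (Nat.mod_eq_zero_of_dvd h2)
  · have h1 : x.val % t < t := Nat.mod_lt _ ht
    rw [(negDecomp hm ht hx).1]
    exact (Nat.mod_eq_of_lt (by omega)).symm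

lemma valDecomp {t : ℕ} (x : ZMod N) : x = ((x.val % t + t * (x.val / t) : ℕ) : ZMod N) := by
  rw [Nat.mod_add_div, ZMod.natCast_val, ZMod.cast_id]

lemma count {t m rr : ℕ} (hm : t * m = N) (ht : 0 < t) (Qs : Finset ℕ)
    (hQ : ∀ q ∈ Qs, q < m) (hr : rr < t) :
    {x : ZMod N | x.val % t = rr ∧ x.val / t ∈ Qs}.ncard = Qs.card := by
  have hval : ∀ q ∈ Qs, ((rr + t * q : ℕ) : ZMod N).val = rr + t * q := by
    intro q hq
    apply ZMod.val_cast_of_lt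
    calc rr + t * q < t + t * q := by omega
    _ = t * (q+1) := by ring
    _ ≤ t * m := Nat.mul_le_mul_left _ (by have := hQ q hq; omega)
    _ = N := hm
  have himg : {x : ZMod N | x.val % t = rr ∧ x.val / t ∈ Qs}
      = (fun q : ℕ => ((rr + t * q : ℕ) : ZMod N)) '' Qs := by
    ext x
    simp only [mem_setOf_eq, mem_image, Finset.mem_coe]
    constructor
    · rintro ⟨h1, h2⟩
      exact ⟨x.val / t, h2, by rw [← h1, Nat.mod_add_div, ZMod.natCast_val, ZMod.cast_id]⟩
    · rintro ⟨q, hq, rfl⟩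
      rw [hval q hq]
      constructor
      · rw [Nat.add_mul_mod_self_left, Nat.mod_eq_of_lt hr]
      · rw [Nat.add_mul_div_left _ _ ht, Nat.div_eq_of_lt hr, zero_add]; exact hq
  rw [himg, Set.ncard_image_of_injOn, Set.ncard_coe_finset]
  intro q1 h1 q2 h2 he
  simp only [Finset.mem_coe] at h1 h2
  have := hval q1 h1
  have := hval q2 h2
  have hvv := congrArg ZMod.val he
  simp only at hvv
  rw [hval q1 h1, hval q2 h2] at hvv
  exact Nat.eq_of_mul_eq_mul_left ht (by omega)


lemma res_eq_iff {N : ℕ} [NeZero N] {t m : ℕ} (hm : t * m = N) (ht : 0 < t) (x y : ZMod N) :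
    t ∣ (x - y).val ↔ x.val % t = y.val % t := by
  have h1 : x = y + (x - y) := by ring
  have h2 : x.val % t = (y.val % t + (x - y).val % t) % t := by
    conv_lhs => rw [h1]
    exact resAdd ⟨m, hm.symm⟩ y (x - y)
  set A := y.val % t with hA
  set B := (x - y).val % t with hB
  have hyt : A < t := Nat.mod_lt _ ht
  have het : B < t := Nat.mod_lt _ ht
  have h3 : (A + B) % t = if A + B < t then A + B else A + B - t := mod2 ht (by omega)
  rw [h3] at h2
  constructor
  · intro h
    have hB0 : B = 0 := by rw [hB]; exact Nat.mod_eq_zero_of_dvd h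
    rw [hB0] at h2
    split_ifs at h2 <;> omega
  · intro h
    apply Nat.dvd_of_mod_eq_zero
    rw [← hB]
    rw [h] at h2
    split_ifs at h2 <;> omega

open QuaternionGroup


variable {n : ℕ} [NeZero n]

local notation "Q" => QuaternionGroup n
local notation "ZN" => ZMod (2*n)

@[simp] lemma inv_a (i : ZN) : (a i : Q)⁻¹ = a (-i) := rfl
@[simp] lemma inv_xa (i : ZN) : (xa i : Q)⁻¹ = xa ((n : ZN) + i) := rfl

instance : NeZero (2*n) := ⟨by have := NeZero.pos n; omega⟩

lemma dvdAdd {d : ℕ} (hd : d ∣ 2*n) (hd0 : 0 < d) {x y : ZN}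
    (hx : d ∣ x.val) (hy : d ∣ y.val) : d ∣ (x + y).val := by
  have h := resAdd hd x y
  rw [Nat.mod_eq_zero_of_dvd hx, Nat.mod_eq_zero_of_dvd hy] at h
  simp only [Nat.zero_add, Nat.zero_mod] at h
  exact Nat.dvd_of_mod_eq_zero h

lemma dvdNeg {d : ℕ} (hd : d ∣ 2*n) (hd0 : 0 < d) {x : ZN}
    (hx : d ∣ x.val) : d ∣ (-x).val := by
  have hm : d * (2*n/d) = 2*n := Nat.mul_div_cancel' hd
  have := resNeg hm hd0 x
  rw [Nat.mod_eq_zero_of_dvd hx, Nat.sub_zero, Nat.mod_self] at this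
  exact Nat.dvd_of_mod_eq_zero this

lemma dvdNeg_iff {d : ℕ} (hd : d ∣ 2*n) (hd0 : 0 < d) {x : ZN} :
    d ∣ (-x).val ↔ d ∣ x.val := by
  constructor
  · intro h; have := dvdNeg hd hd0 h; rwa [neg_neg] at this
  · exact dvdNeg hd hd0

lemma apow (x : ZN) (q : ℕ) : (a x : Q)^q = a ((q : ZN) * x) := by
  induction q with
  | zero => rw [pow_zero, Nat.cast_zero, zero_mul, one_def]
  | succ q ih =>
    rw [pow_succ, ih, a_mul_a]
    congr 1
    push_cast
    ring

lemma aPowMem' {H : Subgroup Q} {d : ℕ} (hmem : a ((d : ℕ) : ZN) ∈ H)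
    (q : ℕ) : a ((d * q : ℕ) : ZN) ∈ H := by
  have h2 : ((a ((d:ℕ) : ZN) : Q))^q ∈ H := H.pow_mem hmem q
  rw [apow] at h2
  convert h2 using 2
  push_cast
  ring

lemma aPowMem {H : Subgroup Q} {d : ℕ} (hmem : a ((d : ℕ) : ZN) ∈ H)
    {i : ZN} (hi : d ∣ i.val) : a i ∈ H := by
  obtain ⟨q, hq⟩ := hi
  have h2 := aPowMem' hmem q
  rwa [← hq, ZMod.natCast_val, ZMod.cast_id] at h2


def sA (n : ℕ) (d : ℕ) : Set (QuaternionGroup n) :=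
  {w | ∃ i, w = a i ∧ d ∣ i.val}

def sB (n : ℕ) (d : ℕ) (c : ZMod (2*n)) : Set (QuaternionGroup n) :=
  {w | (∃ i, w = a i ∧ d ∣ i.val) ∨ (∃ i, w = xa i ∧ d ∣ (i - c).val)}

lemma valN : ((n : ZN)).val = n := by
  rw [ZMod.val_natCast, Nat.mod_eq_of_lt (by have := NeZero.pos n; omega)]

lemma SAsub {d : ℕ} (hd : d ∣ 2*n) (hd0 : 0 < d) : ∃ K : Subgroup Q, (K : Set Q) = sA n d := by
  refine ⟨{ carrier := sA n d, one_mem' := ⟨0, rfl, by simp⟩, mul_mem' := ?_, inv_mem' := ?_ }, rfl⟩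
  · rintro w1 w2 ⟨i, rfl, hi⟩ ⟨j, rfl, hj⟩
    exact ⟨i + j, by rw [a_mul_a], dvdAdd hd hd0 hi hj⟩
  · rintro w ⟨i, rfl, hi⟩
    exact ⟨-i, by rw [inv_a], dvdNeg hd hd0 hi⟩

lemma SBsub {d : ℕ} (hd : d ∣ 2*n) (hd0 : 0 < d) (hdn : d ∣ n) (c : ZN) :
    ∃ K : Subgroup Q, (K : Set Q) = sB n d c := by
  have hdvdN : ∀ x y : ZN, d ∣ x.val → d ∣ y.val → d ∣ (x + y).val := fun x y => dvdAdd hd hd0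
  have hn' : d ∣ ((n : ZN)).val := by rw [valN]; exact hdn
  refine ⟨{ carrier := sB n d c, one_mem' := ?hone, mul_mem' := ?hmul, inv_mem' := ?hinv }, rfl⟩
  case hone => exact Or.inl ⟨0, rfl, by simp⟩
  case' hmul =>
    rintro w1 w2 (⟨i, rfl, hi⟩ | ⟨i, rfl, hi⟩) (⟨j, rfl, hj⟩ | ⟨j, rfl, hj⟩)
    · exact Or.inl ⟨i + j, by rw [a_mul_a], dvdAdd hd hd0 hi hj⟩
    · refine Or.inr ⟨j - i, by rw [a_mul_xa], ?_⟩
      have : j - i - c = (j - c) + (-i) := by ring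
      rw [this]
      exact dvdAdd hd hd0 hj (dvdNeg hd hd0 hi)
    · refine Or.inr ⟨i + j, by rw [xa_mul_a], ?_⟩
      have : i + j - c = (i - c) + j := by ring
      rw [this]
      exact dvdAdd hd hd0 hi hj
    · refine Or.inl ⟨(n : ZN) + j - i, by rw [xa_mul_xa], ?_⟩
      have : (n : ZN) + j - i = (n : ZN) + ((j - c) + (-(i - c))) := by ring
      rw [this]
      exact dvdAdd hd hd0 hn' (dvdAdd hd hd0 hj (dvdNeg hd hd0 hi))
  · rintro w (⟨i, rfl, hi⟩ | ⟨i, rfl, hi⟩)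
    · exact Or.inl ⟨-i, by rw [inv_a], dvdNeg hd hd0 hi⟩
    · refine Or.inr ⟨(n : ZN) + i, by rw [inv_xa], ?_⟩
      have : (n : ZN) + i - c = (n : ZN) + (i - c) := by ring
      rw [this]
      exact dvdAdd hd hd0 hn' hi

lemma mem_closure_a {d : ℕ} {i : ZN} (hi : d ∣ i.val) {L : Subgroup Q}
    (hgen : a ((d : ℕ) : ZN) ∈ L) : a i ∈ L := aPowMem hgen hi

lemma dvd_val_cast {d : ℕ} (hd : d ∣ 2*n) : d ∣ (((d : ℕ) : ZN)).val := by
  rw [ZMod.val_natCast]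
  exact Nat.dvd_mod_iff hd |>.mpr dvd_rfl

lemma closure_a_eq {d : ℕ} (hd : d ∣ 2*n) (hd0 : 0 < d) :
    (Subgroup.closure {a ((d : ℕ) : ZN)} : Set Q) = sA n d := by
  obtain ⟨K, hK⟩ := SAsub hd hd0
  apply subset_antisymm
  · have : Subgroup.closure {a ((d : ℕ) : ZN)} ≤ K := by
      rw [Subgroup.closure_le]
      intro w hw
      rw [mem_singleton_iff] at hw
      subst hw
      rw [hK]
      exact ⟨_, rfl, dvd_val_cast hd⟩
    rw [← hK]
    exact this
  · rintro w ⟨i, rfl, hi⟩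
    exact mem_closure_a hi (Subgroup.subset_closure (mem_singleton _))

lemma closure_b_eq {d : ℕ} (hd : d ∣ 2*n) (hd0 : 0 < d) (hdn : d ∣ n) (c : ZN) :
    (Subgroup.closure {a ((d : ℕ) : ZN), xa c} : Set Q) = sB n d c := by
  obtain ⟨K, hK⟩ := SBsub hd hd0 hdn c
  apply subset_antisymm
  · have : Subgroup.closure {a ((d : ℕ) : ZN), xa c} ≤ K := by
      rw [Subgroup.closure_le]
      intro w hw
      rcases hw with rfl | hw
      · rw [hK]; exact Or.inl ⟨_, rfl, dvd_val_cast hd⟩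
      · rw [mem_singleton_iff] at hw; subst hw
        rw [hK]; exact Or.inr ⟨c, rfl, by simp⟩
    rw [← hK]
    exact this
  · rintro w (⟨i, rfl, hi⟩ | ⟨i, rfl, hi⟩)
    · exact mem_closure_a hi (Subgroup.subset_closure (Or.inl rfl))
    · have hxa : xa c ∈ Subgroup.closure {a ((d : ℕ) : ZN), xa c} :=
        Subgroup.subset_closure (Or.inr (mem_singleton _))
      have hci : (a (c - i) : Q) ∈ Subgroup.closure {a ((d : ℕ) : ZN), xa c} := by
        apply mem_closure_a _ (Subgroup.subset_closure (Or.inl rfl))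
        have : c - i = -(i - c) := by ring
        rw [this]
        exact dvdNeg hd hd0 hi
      have := Subgroup.mul_mem _ hci hxa
      rwa [a_mul_xa, sub_sub_cancel] at this

lemma classify (H : Subgroup Q) :
    (∃ d, d ∣ 2*n ∧ 0 < d ∧ (H : Set Q) = sA n d) ∨
    (∃ d j, d ∣ 2*n ∧ d ∣ n ∧ 0 < d ∧ xa j ∈ H ∧ (H : Set Q) = sB n d j) := by
  have hNpos : 0 < 2*n := NeZero.pos _
  classical
  have hex : ∃ j, 0 < j ∧ a ((j : ℕ) : ZN) ∈ H :=
    ⟨2*n, hNpos, by rw [ZMod.natCast_self]; exact one_def ▸ H.one_mem⟩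
  set d := Nat.find hex with hd
  have hdP := Nat.find_spec hex
  have hd0 : 0 < d := hdP.1
  have hdH : a ((d : ℕ) : ZN) ∈ H := hdP.2
  have hmin : ∀ j, j < d → ¬ (0 < j ∧ a ((j : ℕ) : ZN) ∈ H) := fun j hj => Nat.find_min hex hj
  have key : ∀ i : ZN, a i ∈ H ↔ d ∣ i.val := by
    intro i
    constructor
    · intro hi
      by_contra hnd
      set r := i.val % d with hr
      have hrd : r < d := Nat.mod_lt _ hd0
      have hr0 : r ≠ 0 := fun h => hnd (Nat.dvd_of_mod_eq_zero h)
      set w : ZN := ((d * (i.val / d) : ℕ) : ZN) with hw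
      have hq : a w ∈ H := aPowMem' hdH _
      have hsplit : i = ((r : ℕ) : ZN) + w := by
        have h3 : (r : ℕ) + (d * (i.val / d)) = i.val := by rw [hr, Nat.mod_add_div]
        rw [hw, ← Nat.cast_add, h3, ZMod.natCast_val, ZMod.cast_id]
      have hra : a ((r : ℕ) : ZN) ∈ H := by
        have heq : a ((r:ℕ):ZN) = a i * (a w)⁻¹ := by
          rw [inv_a, a_mul_a, hsplit]; congr 1; ring
        rw [heq]
        exact H.mul_mem hi (H.inv_mem hq)
      exact hmin r hrd ⟨Nat.pos_of_ne_zero hr0, hra⟩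
    · intro hi
      exact aPowMem hdH hi
  have hdN : d ∣ 2*n := by
    by_contra hnd
    set r := (2*n) % d with hr
    have hrd : r < d := Nat.mod_lt _ hd0
    have hr0 : r ≠ 0 := fun h => hnd (Nat.dvd_of_mod_eq_zero h)
    have h1 : a ((d*(2*n/d) : ℕ) : ZN) ∈ H := aPowMem' hdH _
    have h2 : ((r:ℕ):ZN) = -((d*(2*n/d) : ℕ) : ZN) := by
      have h3 : (r : ℕ) + d*(2*n/d) = 2*n := Nat.mod_add_div _ _
      have h4 : ((r:ℕ):ZN) + ((d*(2*n/d):ℕ):ZN) = 0 := by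
        rw [← Nat.cast_add, h3, ZMod.natCast_self]
      exact eq_neg_of_add_eq_zero_left h4
    have hra : a ((r : ℕ) : ZN) ∈ H := by
      rw [h2, ← inv_a]
      exact H.inv_mem h1
    exact hmin r hrd ⟨Nat.pos_of_ne_zero hr0, hra⟩
  by_cases hxa : ∃ j, xa j ∈ H
  · obtain ⟨j, hj⟩ := hxa
    right
    have hdn : d ∣ n := by
      have hsq : (xa j : Q)^2 ∈ H := H.pow_mem hj 2
      rw [xa_sq] at hsq
      rw [key] at hsq
      rwa [valN] at hsq
    refine ⟨d, j, hdN, hdn, hd0, hj, ?_⟩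
    ext w
    constructor
    · intro hw
      cases w with
      | a i => exact Or.inl ⟨i, rfl, (key i).mp hw⟩
      | xa i =>
        refine Or.inr ⟨i, rfl, ?_⟩
        have hmul : (xa i : Q) * (xa j)⁻¹ ∈ H := H.mul_mem hw (H.inv_mem hj)
        rw [inv_xa, xa_mul_xa] at hmul
        rw [key] at hmul
        have he : (n : ZN) + ((n:ZN) + j) - i = j - i := by
          have h2n : ((2*n : ℕ) : ZN) = 0 := ZMod.natCast_self _
          push_cast at h2n
          linear_combination h2n
        rw [he] at hmul
        have := dvdNeg hdN hd0 hmul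
        rwa [neg_sub] at this
    · intro hw
      rcases hw with ⟨i, rfl, hi⟩ | ⟨i, rfl, hi⟩
      · exact (key i).mpr hi
      · have hji : a (j - i) ∈ H := by
          rw [key]
          have := dvdNeg hdN hd0 hi
          rwa [neg_sub] at this
        have := H.mul_mem hji hj
        rwa [a_mul_xa, sub_sub_cancel] at this
  · left
    refine ⟨d, hdN, hd0, ?_⟩
    ext w
    constructor
    · intro hw
      cases w with
      | a i => exact ⟨i, rfl, (key i).mp hw⟩
      | xa i => exact absurd ⟨i, hw⟩ hxa
    · rintro ⟨i, rfl, hi⟩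
      exact (key i).mpr hi

lemma construct_cyclic {t m k : ℕ} (hm : t * m = 2*n) (ht2 : 2 ∣ t)
    (hmo : Odd m) (hko : Odd k) (hk1 : 1 ≤ k) (hkm : k ≤ m) :
    ∃ S : Set Q, (1 : Q) ∉ S ∧ (∀ s ∈ S, s⁻¹ ∈ S) ∧ (∀ h ∈ sA n t, h ∉ S) ∧
      (∀ v : Q, v ∉ sA n t → {u | u ∈ sA n t ∧ u * v⁻¹ ∈ S}.ncard = k) := by
  have hN : 0 < 2*n := NeZero.pos _
  have ht0 : 0 < t := by
    rcases Nat.eq_zero_or_pos t with h | h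
    · subst h; simp at hm; omega
    · exact h
  have hm0 : 0 < m := by
    rcases Nat.eq_zero_or_pos m with h | h
    · subst h; simp at hm; omega
    · exact h
  have hdvd : t ∣ 2*n := ⟨m, hm.symm⟩
  obtain ⟨u, hu⟩ := ht2
  obtain ⟨w, hw⟩ := hmo
  obtain ⟨w2, hw2⟩ := hko
  have hu1 : 1 ≤ u := by omega
  have hnu : n = u + w * t := by
    have h2 : t*m = 2*(u + w*(2*u)) := by rw [hu, hw]; ring
    rw [hu]
    omega
  have hnmod : (n : ZN).val % t = u := by
    rw [valN, hnu, hu, Nat.add_mul_mod_self_right]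
    exact Nat.mod_eq_of_lt (by omega)
  have h2n0 : ((2*n : ℕ) : ZN) = 0 := ZMod.natCast_self _
  have haddnn : ∀ x : ZN, x + (n:ZN) + (n:ZN) = x := by
    intro x
    push_cast at h2n0
    linear_combination h2n0
  classical
  set P : ZN → Prop := fun x => 0 < x.val % t ∧ x.val % t < u ∧ x.val / t < k with hP
  set PM : ZN → Prop := fun x => x.val % t = u ∧ (m-k)/2 ≤ x.val / t ∧ x.val / t < (m-k)/2 + k
    with hPM
  set PX : ZN → Prop := fun x => x.val % t < u ∧ x.val / t < k with hPX
  set Ab : Set ZN := {x | P x ∨ P (-x) ∨ PM x} with hAb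
  set Xb : Set ZN := {x | PX x ∨ PX (x + (n:ZN))} with hXb
  set S : Set Q := {y | (∃ x, y = a x ∧ x ∈ Ab) ∨ (∃ x, y = xa x ∧ x ∈ Xb)} with hS
  have hSa : ∀ x : ZN, (a x : Q) ∈ S ↔ x ∈ Ab := by
    intro x
    constructor
    · rintro (⟨y, hy, h⟩ | ⟨y, hy, h⟩)
      · injection hy with h'; rwa [h']
      · simp at hy
    · intro h; exact Or.inl ⟨x, rfl, h⟩
  have hSxa : ∀ x : ZN, (xa x : Q) ∈ S ↔ x ∈ Xb := by
    intro x
    constructor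
    · rintro (⟨y, hy, h⟩ | ⟨y, hy, h⟩)
      · simp at hy
      · injection hy with h'; rwa [h']
    · intro h; exact Or.inr ⟨x, rfl, h⟩
  have hres : ∀ x : ZN, x.val % t < t := fun x => Nat.mod_lt _ ht0
  have hlvl : ∀ x : ZN, x.val / t < m := fun x => lvl_lt hm ht0 x
  have hneg : ∀ x : ZN, x.val % t ≠ 0 →
      (-x).val % t = t - x.val % t ∧ (-x).val / t = m - 1 - x.val / t :=
    fun x hx => negDecomp hm ht0 hx
  have hresneg : ∀ x : ZN, (-x).val % t = (t - x.val % t) % t := resNeg hm ht0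
  -- class counting for Ab
  have classA : ∀ rr : ℕ, 0 < rr → rr < t → {x : ZN | x.val % t = rr ∧ x ∈ Ab}.ncard = k := by
    intro rr h1 h2
    rcases lt_trichotomy rr u with hc | hc | hc
    · have he : {x : ZN | x.val % t = rr ∧ x ∈ Ab}
          = {x : ZN | x.val % t = rr ∧ x.val / t ∈ Finset.range k} := by
        ext x
        simp only [hAb, hP, hPM, mem_setOf_eq, Finset.mem_range]
        constructor
        · rintro ⟨hx, hp | hp | hp⟩
          · exact ⟨hx, hp.2.2⟩
          · obtain ⟨hn1, hn2, _⟩ := hp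
            have := (hneg x (by omega)).1
            omega
          · omega
        · rintro ⟨hx, hk'⟩
          exact ⟨hx, Or.inl ⟨by omega, by omega, hk'⟩⟩
      rw [he, count hm ht0 _ (fun q hq => by simp only [Finset.mem_range] at hq; omega) h2,
        Finset.card_range]
    · have he : {x : ZN | x.val % t = rr ∧ x ∈ Ab}
          = {x : ZN | x.val % t = rr ∧ x.val / t ∈ Finset.Ico ((m-k)/2) ((m-k)/2 + k)} := by
        ext x
        simp only [hAb, hP, hPM, mem_setOf_eq, Finset.mem_Ico]
        constructor
        · rintro ⟨hx, hp | hp | hp⟩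
          · omega
          · obtain ⟨hn1, hn2, _⟩ := hp
            have := (hneg x (by omega)).1
            omega
          · exact ⟨hx, hp.2⟩
        · rintro ⟨hx, hk'⟩
          exact ⟨hx, Or.inr (Or.inr ⟨by omega, hk'⟩)⟩
      rw [he, count hm ht0 _ (fun q hq => by simp only [Finset.mem_Ico] at hq; omega) h2,
        Nat.card_Ico]
      omega
    · have he : {x : ZN | x.val % t = rr ∧ x ∈ Ab}
          = {x : ZN | x.val % t = rr ∧ x.val / t ∈ Finset.Ico (m-k) m} := by
        ext x
        simp only [hAb, hP, hPM, mem_setOf_eq, Finset.mem_Ico]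
        constructor
        · rintro ⟨hx, hp | hp | hp⟩
          · omega
          · obtain ⟨hn1, hn2, hn3⟩ := hp
            have h3 := (hneg x (by omega)).1
            have h4 := (hneg x (by omega)).2
            have := hlvl x
            omega
          · omega
        · rintro ⟨hx, hk'⟩
          refine ⟨hx, Or.inr (Or.inl ?_)⟩
          have h3 := (hneg x (by omega)).1
          have h4 := (hneg x (by omega)).2
          refine ⟨by omega, by omega, by omega⟩
      rw [he, count hm ht0 _ (fun q hq => by simp only [Finset.mem_Ico] at hq; omega) h2,
        Nat.card_Ico]
      omega
  -- class counting for Xb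
  have classX : ∀ rr : ℕ, rr < t → {x : ZN | x.val % t = rr ∧ x ∈ Xb}.ncard = k := by
    intro rr h2
    have hresadd : ∀ x : ZN, (x + (n:ZN)).val % t = (x.val % t + u) % t := by
      intro x
      rw [resAdd hdvd, hnmod]
    rcases lt_or_ge rr u with hc | hc
    · have he : {x : ZN | x.val % t = rr ∧ x ∈ Xb}
          = {x : ZN | x.val % t = rr ∧ x.val / t ∈ Finset.range k} := by
        ext x
        simp only [hXb, hPX, mem_setOf_eq, Finset.mem_range]
        constructor
        · rintro ⟨hx, hp | hp⟩
          · exact ⟨hx, hp.2⟩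
          · exfalso
            have h3 := hresadd x
            rw [Nat.mod_eq_of_lt (show x.val % t + u < t by omega)] at h3
            omega
        · rintro ⟨hx, hk'⟩
          exact ⟨hx, Or.inl ⟨by omega, hk'⟩⟩
      rw [he, count hm ht0 _ (fun q hq => by simp only [Finset.mem_range] at hq; omega) h2,
        Finset.card_range]
    · have he : {x : ZN | x.val % t = rr ∧ x ∈ Xb}
          = (fun y : ZN => y + (n:ZN)) ''
            {y : ZN | y.val % t = rr - u ∧ y.val / t ∈ Finset.range k} := by
        ext x
        simp only [hXb, hPX, mem_setOf_eq, mem_image, Finset.mem_range]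
        constructor
        · rintro ⟨hx, hp | hp⟩
          · exact absurd hp.1 (by omega)
          · refine ⟨x + (n:ZN), ⟨?_, hp.2⟩, haddnn x⟩
            have h3 := hresadd x
            rw [mod2 ht0 (show x.val % t + u < 2*t by omega)] at h3
            rw [h3]
            split_ifs with h4 <;> omega
        · rintro ⟨y, ⟨hy1, hy2⟩, rfl⟩
          have h3 := hresadd y
          rw [Nat.mod_eq_of_lt (show y.val % t + u < t by omega)] at h3
          constructor
          · omega
          · right
            rw [haddnn y]
            exact ⟨by omega, hy2⟩
      rw [he, Set.ncard_image_of_injective _ (add_left_injective _),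
        count hm ht0 _ (fun q hq => by simp only [Finset.mem_range] at hq; omega) (by omega),
        Finset.card_range]
  refine ⟨S, ?_, ?_, ?_, ?_⟩
  · intro h
    rw [one_def, hSa] at h
    rcases h with hp | hp | hp
    · simp only [hP, ZMod.val_zero, Nat.zero_mod, Nat.zero_div] at hp
      omega
    · rw [neg_zero] at hp
      simp only [hP, ZMod.val_zero, Nat.zero_mod, Nat.zero_div] at hp
      omega
    · simp only [hPM, ZMod.val_zero, Nat.zero_mod, Nat.zero_div] at hp
      omega
  · rintro s (⟨x, rfl, hx⟩ | ⟨x, rfl, hx⟩)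
    · rw [inv_a, hSa]
      rcases hx with hp | hp | hp
      · exact Or.inr (Or.inl (by rwa [neg_neg]))
      · exact Or.inl hp
      · right; right
        obtain ⟨h1, h2, h3⟩ := hp
        have hng := hneg x (by omega)
        have := hlvl x
        simp only [hPM] at *
        refine ⟨by omega, by omega, by omega⟩
    · rw [inv_xa, hSxa]
      rcases hx with hp | hp
      · right
        rw [add_comm (n:ZN) x, haddnn x]
        exact hp
      · left
        rw [add_comm (n:ZN) x]
        exact hp
  · rintro h ⟨i, rfl, hi⟩ hS'
    rw [hSa] at hS'
    have hi0 : i.val % t = 0 := Nat.mod_eq_zero_of_dvd hi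
    rcases hS' with hp | hp | hp
    · simp only [hP] at hp; omega
    · have := hresneg i
      rw [hi0] at this
      simp only [hP] at hp
      simp only [Nat.sub_zero, Nat.mod_self] at this
      omega
    · simp only [hPM] at hp; omega
  · intro v hv
    cases v with
    | a j =>
      have hj : ¬ t ∣ j.val := fun h => hv ⟨j, rfl, h⟩
      have hj' : j.val % t ≠ 0 := fun h => hj (Nat.dvd_of_mod_eq_zero h)
      have hrj : (-j).val % t = t - j.val % t := (hneg j hj').1
      have he : {x | x ∈ sA n t ∧ x * (a j)⁻¹ ∈ S}
          = (fun x : ZN => a (x + j)) '' {x : ZN | x.val % t = t - j.val % t ∧ x ∈ Ab} := by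
        ext q
        simp only [mem_setOf_eq, mem_image]
        constructor
        · rintro ⟨⟨i, rfl, hi⟩, hq2⟩
          rw [inv_a, a_mul_a, hSa] at hq2
          refine ⟨i + -j, ⟨?_, hq2⟩, by rw [neg_add_cancel_right]⟩
          have hd2 : t ∣ ((i + -j) - -j).val := by rwa [sub_neg_eq_add, neg_add_cancel_right]
          rw [res_eq_iff hm ht0] at hd2
          rw [hd2, hrj]
        · rintro ⟨x, ⟨hx1, hx2⟩, rfl⟩
          constructor
          · refine ⟨x + j, rfl, ?_⟩
            have : x.val % t = (-j).val % t := by rw [hrj]; exact hx1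
            rw [← res_eq_iff hm ht0 x (-j), sub_neg_eq_add] at this
            exact this
          · rw [inv_a, a_mul_a, add_neg_cancel_right, hSa]
            exact hx2
      rw [he, Set.ncard_image_of_injective, classA _ (by have := hres j; omega) (by have := hres j; omega)]
      intro x y hxy
      simp only [a.injEq] at hxy
      exact add_right_cancel hxy
    | xa j =>
      set wj : ZN := (n:ZN) + j with hwj
      have he : {x | x ∈ sA n t ∧ x * (xa j)⁻¹ ∈ S}
          = (fun x : ZN => a (wj - x)) '' {x : ZN | x.val % t = wj.val % t ∧ x ∈ Xb} := by
        ext q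
        simp only [mem_setOf_eq, mem_image]
        constructor
        · rintro ⟨⟨i, rfl, hi⟩, hq2⟩
          rw [inv_xa, a_mul_xa, ← hwj, hSxa] at hq2
          refine ⟨wj - i, ⟨?_, hq2⟩, by rw [sub_sub_cancel]⟩
          have hd2 : t ∣ (wj - (wj - i)).val := by rwa [sub_sub_cancel]
          rw [res_eq_iff hm ht0] at hd2
          exact hd2.symm
        · rintro ⟨x, ⟨hx1, hx2⟩, rfl⟩
          constructor
          · refine ⟨wj - x, rfl, ?_⟩
            rw [res_eq_iff hm ht0 wj x]
            exact hx1.symm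
          · rw [inv_xa, a_mul_xa, ← hwj, sub_sub_cancel, hSxa]
            exact hx2
      rw [he, Set.ncard_image_of_injective, classX _ (hres wj)]
      intro x y hxy
      simp only [a.injEq] at hxy
      exact sub_right_injective hxy

lemma construct_dicyclic {t m k : ℕ} (hm : t * m = 2*n) (hto : Odd t) (htn : t ∣ n)
    (hk1 : 1 ≤ k) (hkm : k ≤ 2*m) (c : ZN) :
    ∃ S : Set Q, (1 : Q) ∉ S ∧ (∀ s ∈ S, s⁻¹ ∈ S) ∧ (∀ h ∈ sB n t c, h ∉ S) ∧
      (∀ v : Q, v ∉ sB n t c → {u | u ∈ sB n t c ∧ u * v⁻¹ ∈ S}.ncard = k) := by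
  have hN : 0 < 2*n := NeZero.pos _
  have ht0 : 0 < t := hto.pos
  have hm0 : 0 < m := by
    rcases Nat.eq_zero_or_pos m with h | h
    · subst h; simp at hm; omega
    · exact h
  have hdvd : t ∣ 2*n := ⟨m, hm.symm⟩
  obtain ⟨z, hz⟩ := hto
  set kA := if m < k then k - m else k with hkA
  have hkAm : kA ≤ m := by rw [hkA]; split_ifs <;> omega
  have hnmod : (n : ZN).val % t = 0 := by
    rw [valN]
    exact Nat.mod_eq_zero_of_dvd htn
  have h2n0 : ((2*n : ℕ) : ZN) = 0 := ZMod.natCast_self _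
  have h2n0' : (2*(n:ZN)) = 0 := by push_cast at h2n0; linear_combination h2n0
  classical
  set P : ZN → Prop := fun x => 0 < x.val % t ∧ 2*(x.val % t) < t ∧ x.val / t < kA with hP
  set Ab : Set ZN := {x | P x ∨ P (-x)} with hAb
  set Xb : Set ZN := {x | m < k ∧ ¬ t ∣ (x - c).val} with hXb
  set S : Set Q := {y | (∃ x, y = a x ∧ x ∈ Ab) ∨ (∃ x, y = xa x ∧ x ∈ Xb)} with hS
  have hSa : ∀ x : ZN, (a x : Q) ∈ S ↔ x ∈ Ab := by
    intro x
    constructor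
    · rintro (⟨y, hy, h⟩ | ⟨y, hy, h⟩)
      · injection hy with h'; rwa [h']
      · simp at hy
    · intro h; exact Or.inl ⟨x, rfl, h⟩
  have hSxa : ∀ x : ZN, (xa x : Q) ∈ S ↔ x ∈ Xb := by
    intro x
    constructor
    · rintro (⟨y, hy, h⟩ | ⟨y, hy, h⟩)
      · simp at hy
      · injection hy with h'; rwa [h']
    · intro h; exact Or.inr ⟨x, rfl, h⟩
  have hres : ∀ x : ZN, x.val % t < t := fun x => Nat.mod_lt _ ht0
  have hlvl : ∀ x : ZN, x.val / t < m := fun x => lvl_lt hm ht0 x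
  have hneg : ∀ x : ZN, x.val % t ≠ 0 →
      (-x).val % t = t - x.val % t ∧ (-x).val / t = m - 1 - x.val / t :=
    fun x hx => negDecomp hm ht0 hx
  have hresneg : ∀ x : ZN, (-x).val % t = (t - x.val % t) % t := resNeg hm ht0
  have hresn : ∀ x : ZN, ((n:ZN) + x).val % t = x.val % t := by
    intro x
    rw [add_comm, resAdd hdvd, hnmod, Nat.add_zero, Nat.mod_eq_of_lt (hres x)]
  have classA : ∀ rr : ℕ, 0 < rr → rr < t → {x : ZN | x.val % t = rr ∧ x ∈ Ab}.ncard = kA := by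
    intro rr h1 h2
    rcases lt_or_ge (2*rr) t with hc | hc
    · have he : {x : ZN | x.val % t = rr ∧ x ∈ Ab}
          = {x : ZN | x.val % t = rr ∧ x.val / t ∈ Finset.range kA} := by
        ext x
        simp only [hAb, hP, mem_setOf_eq, Finset.mem_range]
        constructor
        · rintro ⟨hx, hp | hp⟩
          · exact ⟨hx, hp.2.2⟩
          · obtain ⟨hn1, hn2, _⟩ := hp
            have := (hneg x (by omega)).1
            omega
        · rintro ⟨hx, hk'⟩
          exact ⟨hx, Or.inl ⟨by omega, by omega, hk'⟩⟩
      rw [he, count hm ht0 _ (fun q hq => by simp only [Finset.mem_range] at hq; omega) h2,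
        Finset.card_range]
    · have he : {x : ZN | x.val % t = rr ∧ x ∈ Ab}
          = {x : ZN | x.val % t = rr ∧ x.val / t ∈ Finset.Ico (m-kA) m} := by
        ext x
        simp only [hAb, hP, mem_setOf_eq, Finset.mem_Ico]
        constructor
        · rintro ⟨hx, hp | hp⟩
          · omega
          · obtain ⟨hn1, hn2, hn3⟩ := hp
            have h3 := (hneg x (by omega)).1
            have h4 := (hneg x (by omega)).2
            have := hlvl x
            omega
        · rintro ⟨hx, hk'⟩
          refine ⟨hx, Or.inr ?_⟩
          have h3 := (hneg x (by omega)).1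
          have h4 := (hneg x (by omega)).2
          refine ⟨by omega, by omega, by omega⟩
      rw [he, count hm ht0 _ (fun q hq => by simp only [Finset.mem_Ico] at hq; omega) h2,
        Nat.card_Ico]
      omega
  have classX : ∀ rr : ℕ, rr < t → rr ≠ c.val % t →
      {x : ZN | x.val % t = rr ∧ x ∈ Xb}.ncard = (if m < k then m else 0) := by
    intro rr h2 hrc
    split_ifs with hmk
    · have he : {x : ZN | x.val % t = rr ∧ x ∈ Xb}
          = {x : ZN | x.val % t = rr ∧ x.val / t ∈ Finset.range m} := by
        ext x
        simp only [hXb, mem_setOf_eq, Finset.mem_range]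
        constructor
        · rintro ⟨hx, _⟩
          exact ⟨hx, hlvl x⟩
        · rintro ⟨hx, _⟩
          refine ⟨hx, hmk, ?_⟩
          rw [res_eq_iff hm ht0]
          omega
      rw [he, count hm ht0 _ (fun q hq => by simp only [Finset.mem_range] at hq; omega) h2,
        Finset.card_range]
    · have he : {x : ZN | x.val % t = rr ∧ x ∈ Xb} = (∅ : Set ZN) := by
        ext x
        simp only [hXb, mem_setOf_eq, mem_empty_iff_false, iff_false, not_and]
        intro _ h3 _
        exact hmk h3
      rw [he, Set.ncard_empty]
  have hkAk : kA + (if m < k then m else 0) = k := by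
    rw [hkA]; split_ifs <;> omega
  refine ⟨S, ?_, ?_, ?_, ?_⟩
  · intro h
    rw [one_def, hSa] at h
    rcases h with hp | hp
    · simp only [hP, ZMod.val_zero, Nat.zero_mod, Nat.zero_div] at hp
      omega
    · rw [neg_zero] at hp
      simp only [hP, ZMod.val_zero, Nat.zero_mod, Nat.zero_div] at hp
      omega
  · rintro s (⟨x, rfl, hx⟩ | ⟨x, rfl, hx⟩)
    · rw [inv_a, hSa]
      rcases hx with hp | hp
      · exact Or.inr (by rwa [neg_neg])
      · exact Or.inl hp
    · rw [inv_xa, hSxa]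
      obtain ⟨h1, h2⟩ := hx
      refine ⟨h1, ?_⟩
      intro hdv
      apply h2
      rw [res_eq_iff hm ht0] at hdv ⊢
      rw [← hdv, hresn]
  · rintro h (⟨i, rfl, hi⟩ | ⟨i, rfl, hi⟩) hS'
    · rw [hSa] at hS'
      have hi0 : i.val % t = 0 := Nat.mod_eq_zero_of_dvd hi
      rcases hS' with hp | hp
      · simp only [hP] at hp; omega
      · have := hresneg i
        rw [hi0] at this
        simp only [hP] at hp
        simp only [Nat.sub_zero, Nat.mod_self] at this
        omega
    · rw [hSxa] at hS'
      exact hS'.2 hi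
  · intro v hv
    cases v with
    | a j =>
      have hj : ¬ t ∣ j.val := fun h => hv (Or.inl ⟨j, rfl, h⟩)
      have hj' : j.val % t ≠ 0 := fun h => hj (Nat.dvd_of_mod_eq_zero h)
      have hrj : (-j).val % t = t - j.val % t := (hneg j hj').1
      have he : {u | u ∈ sB n t c ∧ u * (a j)⁻¹ ∈ S}
          = ((fun x : ZN => a (x + j)) '' {x : ZN | x.val % t = t - j.val % t ∧ x ∈ Ab})
            ∪ ((fun x : ZN => xa (x + j)) ''
              {x : ZN | x.val % t = (c - j).val % t ∧ x ∈ Xb}) := by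
        ext q
        simp only [mem_setOf_eq, mem_union, mem_image]
        constructor
        · rintro ⟨⟨i, rfl, hi⟩ | ⟨i, rfl, hi⟩, hq2⟩
          · left
            rw [inv_a, a_mul_a, hSa] at hq2
            refine ⟨i + -j, ⟨?_, hq2⟩, by rw [neg_add_cancel_right]⟩
            have hd2 : t ∣ ((i + -j) - -j).val := by rwa [sub_neg_eq_add, neg_add_cancel_right]
            rw [res_eq_iff hm ht0] at hd2
            rw [hd2, hrj]
          · right
            rw [inv_a, xa_mul_a, hSxa] at hq2
            refine ⟨i + -j, ⟨?_, hq2⟩, by rw [neg_add_cancel_right]⟩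
            have hd2 : t ∣ ((i + -j) - (c - j)).val := by
              have heq : (i + -j) - (c - j) = i - c := by ring
              rw [heq]; exact hi
            rw [res_eq_iff hm ht0] at hd2
            exact hd2
        · rintro (⟨x, ⟨hx1, hx2⟩, rfl⟩ | ⟨x, ⟨hx1, hx2⟩, rfl⟩)
          · constructor
            · refine Or.inl ⟨x + j, rfl, ?_⟩
              have hh : x.val % t = (-j).val % t := by rw [hrj]; exact hx1
              rw [← res_eq_iff hm ht0 x (-j), sub_neg_eq_add] at hh
              exact hh
            · rw [inv_a, a_mul_a, add_neg_cancel_right, hSa]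
              exact hx2
          · constructor
            · refine Or.inr ⟨x + j, rfl, ?_⟩
              rw [← res_eq_iff hm ht0 x (c - j)] at hx1
              have heq : x - (c - j) = (x + j) - c := by ring
              rwa [heq] at hx1
            · rw [inv_a, xa_mul_a, add_neg_cancel_right, hSxa]
              exact hx2
      rw [he, Set.ncard_union_eq ?dis (Set.toFinite _) (Set.toFinite _)]
      case dis =>
        rw [Set.disjoint_left]
        rintro y ⟨x1, _, rfl⟩ ⟨x2, _, hx2⟩
        simp at hx2
      rw [Set.ncard_image_of_injective _ (fun x y hxy => by
          simpa only [a.injEq, add_left_inj] using hxy),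
        Set.ncard_image_of_injective _ (fun x y hxy => by
          simpa only [xa.injEq, add_left_inj] using hxy)]
      rw [classA _ (by have := hres j; omega) (by have := hres j; omega)]
      rw [classX _ (hres _) ?neq]
      case neq =>
        intro hcon
        apply hj
        have : t ∣ ((c - j) - c).val := by
          rw [res_eq_iff hm ht0]
          exact hcon
        have heq : (c - j) - c = -j := by ring
        rw [heq] at this
        rwa [dvdNeg_iff hdvd ht0] at this
      exact hkAk
    | xa j =>
      have hj : ¬ t ∣ (j - c).val := by
        intro h
        exact hv (Or.inr ⟨j, rfl, h⟩)
      have hj' : (j - c).val % t ≠ 0 := fun h => hj (Nat.dvd_of_mod_eq_zero h)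
      have he : {u | u ∈ sB n t c ∧ u * (xa j)⁻¹ ∈ S}
          = ((fun x : ZN => a ((n:ZN) + j - x)) ''
              {x : ZN | x.val % t = ((n:ZN) + j).val % t ∧ x ∈ Xb})
            ∪ ((fun x : ZN => xa (j - x)) ''
              {x : ZN | x.val % t = (j - c).val % t ∧ x ∈ Ab}) := by
        ext q
        simp only [mem_setOf_eq, mem_union, mem_image]
        constructor
        · rintro ⟨⟨i, rfl, hi⟩ | ⟨i, rfl, hi⟩, hq2⟩
          · left
            rw [inv_xa, a_mul_xa, hSxa] at hq2
            refine ⟨(n:ZN) + j - i, ⟨?_, hq2⟩, by rw [sub_sub_cancel]⟩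
            have hd2 : t ∣ (((n:ZN) + j) - ((n:ZN) + j - i)).val := by
              rwa [sub_sub_cancel]
            rw [res_eq_iff hm ht0] at hd2
            exact hd2.symm
          · right
            rw [inv_xa, xa_mul_xa] at hq2
            have heq : (n:ZN) + ((n:ZN) + j) - i = j - i := by linear_combination h2n0'
            rw [heq, hSa] at hq2
            refine ⟨j - i, ⟨?_, hq2⟩, by rw [sub_sub_cancel]⟩
            have hd2 : t ∣ ((j - i) - (j - c)).val := by
              have heq2 : (j - i) - (j - c) = -(i - c) := by ring
              rw [heq2, dvdNeg_iff hdvd ht0]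
              exact hi
            rw [res_eq_iff hm ht0] at hd2
            exact hd2
        · rintro (⟨x, ⟨hx1, hx2⟩, rfl⟩ | ⟨x, ⟨hx1, hx2⟩, rfl⟩)
          · constructor
            · refine Or.inl ⟨(n:ZN) + j - x, rfl, ?_⟩
              exact (res_eq_iff hm ht0 ((n:ZN) + j) x).mpr hx1.symm
            · rw [inv_xa, a_mul_xa, sub_sub_cancel, hSxa]
              exact hx2
          · constructor
            · refine Or.inr ⟨j - x, rfl, ?_⟩
              rw [← res_eq_iff hm ht0 x (j - c)] at hx1
              have heq : x - (j - c) = -((j - x) - c) := by ring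
              rw [heq, dvdNeg_iff hdvd ht0] at hx1
              exact hx1
            · rw [inv_xa, xa_mul_xa]
              have heq : (n:ZN) + ((n:ZN) + j) - (j - x) = x := by linear_combination h2n0'
              rw [heq, hSa]
              exact hx2
      rw [he, Set.ncard_union_eq ?dis2 (Set.toFinite _) (Set.toFinite _)]
      case dis2 =>
        rw [Set.disjoint_left]
        rintro y ⟨x1, _, rfl⟩ ⟨x2, _, hx2⟩
        simp at hx2
      rw [Set.ncard_image_of_injective _ (fun x y hxy => by
          simpa only [a.injEq, sub_right_inj] using hxy),
        Set.ncard_image_of_injective _ (fun x y hxy => by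
          simpa only [xa.injEq, sub_right_inj] using hxy)]
      rw [classA _ (by have := hres (j - c); omega) (hres _)]
      rw [classX _ (hres _) ?neq2]
      case neq2 =>
        intro hcon
        apply hj
        have h5 : ((n:ZN) + j).val % t = j.val % t := hresn j
        have : t ∣ (j - c).val := by
          rw [res_eq_iff hm ht0]
          omega
        exact this
      omega

lemma obstruct_cyclic {d m k : ℕ} (hm : d * m = 2*n) (hd0 : 0 < d) (hme : ¬ Odd m)
    (hodd : Odd k) (S : Set Q) (hinv : ∀ s ∈ S, s⁻¹ ∈ S)
    (hcount : ∀ v : Q, v ∉ sA n d → {u | u ∈ sA n d ∧ u * v⁻¹ ∈ S}.ncard = k) : False := by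
  have hn1 : 0 < n := NeZero.pos n
  have hdvd : d ∣ 2*n := ⟨m, hm.symm⟩
  have hme' : Even m := Nat.not_odd_iff_even.mp hme
  obtain ⟨l, hl⟩ := hme'
  have hdn : d ∣ n := by
    refine ⟨l, ?_⟩
    rw [hl] at hm
    have e1 : d * (l + l) = d*l + d*l := by ring
    omega
  have hdnv : d ∣ ((n : ZN)).val := by rw [valN]; exact hdn
  have hv : (xa 0 : Q) ∉ sA n d := by
    rintro ⟨i, hi, _⟩
    simp at hi
  have hk := hcount (xa 0) hv
  have hfu : ∀ u : Q, ((xa 0 : Q) * u⁻¹ * xa 0) * (xa 0 : Q)⁻¹ = (u * (xa 0 : Q)⁻¹)⁻¹ := by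
    intro u; group
  have heven : Even k := by
    rw [← hk]
    apply even_ncard_of_involution _ _ rfl (Set.toFinite _)
      (fun u => (xa 0 : Q) * u⁻¹ * (xa 0))
    · rintro u ⟨⟨i, rfl, hi⟩, hu2⟩
      have hcalc : (xa 0 : Q) * (a i)⁻¹ * (xa 0) = a ((n:ZN) + i) := by
        rw [inv_a, xa_mul_a, xa_mul_xa]
        congr 1
        ring
      constructor
      · rw [hcalc]
        exact ⟨(n:ZN) + i, rfl, dvdAdd hdvd hd0 hdnv hi⟩
      · rw [hfu]
        exact hinv _ hu2
    · rintro u ⟨⟨i, rfl, hi⟩, hu2⟩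
      group
    · rintro u ⟨⟨i, rfl, hi⟩, hu2⟩
      have hcalc : (xa 0 : Q) * (a i)⁻¹ * (xa 0) = a ((n:ZN) + i) := by
        rw [inv_a, xa_mul_a, xa_mul_xa]
        congr 1
        ring
      rw [hcalc]
      intro hcon
      injection hcon with h'
      have h2 : (n : ZN) = 0 := by
        have := add_right_cancel (h'.trans (zero_add i).symm)
        simpa using this
      have := congrArg ZMod.val h2
      rw [valN, ZMod.val_zero] at this
      omega
  obtain ⟨a1, ha1⟩ := hodd
  obtain ⟨b1, hb1⟩ := heven
  omega

lemma obstruct_dicyclic {d k : ℕ} (hd0 : 0 < d) (hdn : d ∣ n) (hde : 2 ∣ d)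
    (hodd : Odd k) (c : ZN) (S : Set Q) (hinv : ∀ s ∈ S, s⁻¹ ∈ S)
    (hcount : ∀ v : Q, v ∉ sB n d c → {u | u ∈ sB n d c ∧ u * v⁻¹ ∈ S}.ncard = k) : False := by
  have hn1 : 0 < n := NeZero.pos n
  have hdvd : d ∣ 2*n := hdn.mul_left 2
  have hdle : d ≤ n := Nat.le_of_dvd hn1 hdn
  have hdnv : d ∣ ((n : ZN)).val := by rw [valN]; exact hdn
  set v : Q := a (((d/2 : ℕ)) : ZN) with hvdef
  have hvval : (((d/2 : ℕ)) : ZN).val = d/2 := ZMod.val_cast_of_lt (by omega)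
  have hv : v ∉ sB n d c := by
    rintro (⟨i, hi, hdi⟩ | ⟨i, hi, _⟩)
    · rw [hvdef] at hi
      injection hi with h'
      rw [← h'] at hdi
      rw [hvval] at hdi
      have := Nat.le_of_dvd (by omega) hdi
      omega
    · rw [hvdef] at hi; simp at hi
  have hk := hcount v hv
  have hfu : ∀ u : Q, (v * u⁻¹ * v) * v⁻¹ = (u * v⁻¹)⁻¹ := by
    intro u; group
  have hw2 : (((d/2 : ℕ)) : ZN) + (((d/2 : ℕ)) : ZN) = (((d : ℕ)) : ZN) := by
    rw [← Nat.cast_add]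
    congr 1
    omega
  have heven : Even k := by
    rw [← hk]
    apply even_ncard_of_involution _ _ rfl (Set.toFinite _) (fun u => v * u⁻¹ * v)
    · rintro u ⟨(⟨i, rfl, hi⟩ | ⟨i, rfl, hi⟩), hu2⟩
      · have hcalc : v * (a i)⁻¹ * v = a (((d:ℕ):ZN) + -i) := by
          rw [hvdef, inv_a, a_mul_a, a_mul_a]
          congr 1
          linear_combination hw2
        refine ⟨?_, by rw [hfu]; exact hinv _ hu2⟩
        rw [hcalc]
        exact Or.inl ⟨_, rfl, dvdAdd hdvd hd0 (dvd_val_cast hdvd) (dvdNeg hdvd hd0 hi)⟩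
      · have hcalc : v * (xa i)⁻¹ * v = xa ((n:ZN) + i) := by
          rw [hvdef, inv_xa, a_mul_xa, xa_mul_a]
          congr 1
          ring
        refine ⟨?_, by rw [hfu]; exact hinv _ hu2⟩
        rw [hcalc]
        refine Or.inr ⟨_, rfl, ?_⟩
        have heq : (n:ZN) + i - c = (n:ZN) + (i - c) := by ring
        rw [heq]
        exact dvdAdd hdvd hd0 hdnv hi
    · rintro u ⟨_, _⟩
      group
    · rintro u ⟨(⟨i, rfl, hi⟩ | ⟨i, rfl, hi⟩), hu2⟩
      · have hcalc : v * (a i)⁻¹ * v = a (((d:ℕ):ZN) + -i) := by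
          rw [hvdef, inv_a, a_mul_a, a_mul_a]
          congr 1
          linear_combination hw2
        rw [hcalc]
        intro hcon
        injection hcon with h'
        have h2 : i + i = (((d:ℕ)) : ZN) := by linear_combination - h'
        have h3 := congrArg ZMod.val h2
        rw [ZMod.val_add, ZMod.val_cast_of_lt (by omega)] at h3
        obtain ⟨q, hq⟩ := hi
        obtain ⟨p, hp⟩ := hdn
        have h4 : (i.val + i.val) % (2*n) = i.val + i.val ∨
            (i.val + i.val) % (2*n) = i.val + i.val - 2*n := by
          have hlt := i.val_lt
          rw [mod2 (by omega) (by omega)]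
          split_ifs <;> omega
        have e1 : d*q + d*q = d*(2*q) := by ring
        have e2 : d*p + d*p = d*(2*p) := by ring
        have e3 : d*(2*p) + d = d*(2*p+1) := by ring
        rcases h4 with h4 | h4
        · have h5 : d*(2*q) = d*1 := by omega
          have := Nat.eq_of_mul_eq_mul_left hd0 h5
          omega
        · have h5 : d*(2*q) = d*(2*p+1) := by omega
          have := Nat.eq_of_mul_eq_mul_left hd0 h5
          omega
      · have hcalc : v * (xa i)⁻¹ * v = xa ((n:ZN) + i) := by
          rw [hvdef, inv_xa, a_mul_xa, xa_mul_a]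
          congr 1
          ring
        rw [hcalc]
        intro hcon
        injection hcon with h'
        have h2 : (n : ZN) = 0 := by linear_combination h' - i
        have := congrArg ZMod.val h2
        rw [valN, ZMod.val_zero] at this
        omega
  obtain ⟨a1, ha1⟩ := hodd
  obtain ⟨b1, hb1⟩ := heven
  omega

lemma ncard_dvd_set {d m : ℕ} (hm : d * m = 2*n) (hd0 : 0 < d) :
    {x : ZN | d ∣ x.val}.ncard = m := by
  have he : {x : ZN | d ∣ x.val}
      = {x : ZN | x.val % d = 0 ∧ x.val / d ∈ Finset.range m} := by
    ext x
    simp only [mem_setOf_eq, Finset.mem_range]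
    constructor
    · intro h
      exact ⟨Nat.mod_eq_zero_of_dvd h, lvl_lt hm hd0 x⟩
    · rintro ⟨h1, _⟩
      exact Nat.dvd_of_mod_eq_zero h1
  rw [he, count hm hd0 _ (fun q hq => by simpa using hq) hd0, Finset.card_range]

lemma ncard_sA {d m : ℕ} (hm : d * m = 2*n) (hd0 : 0 < d) : (sA n d).ncard = m := by
  have he : sA n d = (fun x : ZN => (a x : Q)) '' {x : ZN | d ∣ x.val} := by
    ext w
    simp only [sA, mem_image, mem_setOf_eq]
    constructor
    · rintro ⟨i, rfl, hi⟩; exact ⟨i, hi, rfl⟩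
    · rintro ⟨x, h1, rfl⟩; exact ⟨x, rfl, h1⟩
  rw [he, Set.ncard_image_of_injective _ (fun x y h => by injection h), ncard_dvd_set hm hd0]

lemma ncard_sB {d m : ℕ} (hm : d * m = 2*n) (hd0 : 0 < d) (c : ZN) :
    (sB n d c).ncard = 2*m := by
  have hdvd : d ∣ 2*n := ⟨m, hm.symm⟩
  have h2 : {x : ZN | d ∣ (x - c).val} = (fun y : ZN => y + c) '' {x : ZN | d ∣ x.val} := by
    ext x
    simp only [mem_image, mem_setOf_eq]
    constructor
    · intro h
      exact ⟨x - c, h, by ring⟩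
    · rintro ⟨y, hy, rfl⟩
      rwa [add_sub_cancel_right]
  have he : sB n d c = ((fun x : ZN => (a x : Q)) '' {x : ZN | d ∣ x.val})
      ∪ ((fun x : ZN => (xa x : Q)) '' {x : ZN | d ∣ (x - c).val}) := by
    ext w
    simp only [sB, mem_union, mem_image, mem_setOf_eq]
    constructor
    · rintro (⟨i, rfl, hi⟩ | ⟨i, rfl, hi⟩)
      · exact Or.inl ⟨i, hi, rfl⟩
      · exact Or.inr ⟨i, hi, rfl⟩
    · rintro (⟨x, h1, rfl⟩ | ⟨x, h1, rfl⟩)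
      · exact Or.inl ⟨x, rfl, h1⟩
      · exact Or.inr ⟨x, rfl, h1⟩
  rw [he, Set.ncard_union_eq ?dis (Set.toFinite _) (Set.toFinite _)]
  case dis =>
    rw [Set.disjoint_left]
    rintro y ⟨x1, _, rfl⟩ ⟨x2, _, hx2⟩
    simp at hx2
  rw [Set.ncard_image_of_injective _ (fun x y h => by injection h),
    Set.ncard_image_of_injective _ (fun x y h => by injection h),
    ncard_dvd_set hm hd0, h2,
    Set.ncard_image_of_injective _ (add_left_injective c), ncard_dvd_set hm hd0]
  omega

lemma sB_congr {d : ℕ} (hdvd : d ∣ 2*n) (hd0 : 0 < d) {c1 c2 : ZN}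
    (h : d ∣ (c1 - c2).val) : sB n d c1 = sB n d c2 := by
  have key : ∀ i : ZN, d ∣ (i - c1).val → d ∣ (i - c2).val := by
    intro i hi
    have heq : i - c2 = (i - c1) + (c1 - c2) := by ring
    rw [heq]
    exact dvdAdd hdvd hd0 hi h
  have key2 : ∀ i : ZN, d ∣ (i - c2).val → d ∣ (i - c1).val := by
    intro i hi
    have heq : i - c1 = (i - c2) + (-(c1 - c2)) := by ring
    rw [heq]
    exact dvdAdd hdvd hd0 hi (dvdNeg hdvd hd0 h)
  ext w
  simp only [sB, mem_setOf_eq]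
  constructor
  · rintro (h1 | ⟨i, rfl, hi⟩)
    · exact Or.inl h1
    · exact Or.inr ⟨i, rfl, key i hi⟩
  · rintro (h1 | ⟨i, rfl, hi⟩)
    · exact Or.inl h1
    · exact Or.inr ⟨i, rfl, key2 i hi⟩

end Aux

theorem stmt16 (n : ℕ) (hn : 2 ≤ n) (H : Subgroup (QuaternionGroup n)) (hprop : H ≠ ⊤)
    (k : ℕ) (hk1 : 1 ≤ k) (hk2 : k ≤ Nat.card H) (hodd : Odd k) :
    IsRegularSetOfGroup (QuaternionGroup n) (H : Set (QuaternionGroup n)) k ↔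
      ((∃ t : ℕ, t ∣ 2 * n ∧ Odd ((2 * n) / t) ∧
          H = Subgroup.closure {QuaternionGroup.a (t : ZMod (2 * n))}) ∨
       (∃ t s : ℕ, t ∣ 2 * n ∧ Odd t ∧ s ≤ t - 1 ∧
          H = Subgroup.closure
            {QuaternionGroup.a (t : ZMod (2 * n)),
             QuaternionGroup.a (s : ZMod (2 * n)) * QuaternionGroup.xa 0})) := by
  haveI : NeZero n := ⟨by omega⟩
  have hN : (0:ℕ) < 2*n := by omega
  have hcard : Nat.card H = (H : Set (QuaternionGroup n)).ncard := by
    rw [← Nat.card_coe_set_eq]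
    rfl
  rw [regular_iff H hprop k]
  constructor
  · rintro ⟨S, h1S, hinvS, hdisjS, hcountS⟩
    rcases Aux.classify H with ⟨d, hdN, hd0, hcar⟩ | ⟨d, j, hdN, hdn, hd0, hxaj, hcar⟩
    · left
      have hm : d * (2*n/d) = 2*n := Nat.mul_div_cancel' hdN
      have hmo : Odd (2*n/d) := by
        by_contra hme
        refine Aux.obstruct_cyclic hm hd0 hme hodd S hinvS ?_
        intro v hv
        rw [← hcar]
        refine hcountS v ?_
        intro hmem
        apply hv
        have h2 : v ∈ (H : Set (QuaternionGroup n)) := hmem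
        rwa [hcar] at h2
      refine ⟨d, hdN, hmo, ?_⟩
      apply SetLike.ext'
      rw [Aux.closure_a_eq hdN hd0]
      exact hcar
    · right
      have hde : Odd d := by
        by_contra heven
        have hde2 : 2 ∣ d := by
          rcases Nat.even_or_odd d with he | ho
          · obtain ⟨x, hx⟩ := he; exact ⟨x, by omega⟩
          · exact absurd ho heven
        refine Aux.obstruct_dicyclic hd0 hdn hde2 hodd j S hinvS ?_
        intro v hv
        rw [← hcar]
        refine hcountS v ?_
        intro hmem
        apply hv
        have h2 : v ∈ (H : Set (QuaternionGroup n)) := hmem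
        rwa [hcar] at h2
      have hex : ∃ s : ℕ, s < d ∧ (j.val % d + s) % d = 0 := by
        refine ⟨(d - j.val % d) % d, Nat.mod_lt _ hd0, ?_⟩
        have hjd : j.val % d < d := Nat.mod_lt _ hd0
        rcases Nat.eq_zero_or_pos (j.val % d) with h0 | h0
        · rw [h0]
          simp
        · have h3 : (d - j.val % d) % d = d - j.val % d := Nat.mod_eq_of_lt (by omega)
          rw [h3]
          have he2 : j.val % d + (d - j.val % d) = d := by omega
          rw [he2, Nat.mod_self]
      obtain ⟨s, hsd, hsum⟩ := hex
      refine ⟨d, s, hdN, hde, by omega, ?_⟩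
      have hgen : (QuaternionGroup.a ((s:ℕ) : ZMod (2*n)) * QuaternionGroup.xa 0)
          = QuaternionGroup.xa (0 - ((s:ℕ) : ZMod (2*n))) := by
        rw [QuaternionGroup.a_mul_xa]
      apply SetLike.ext'
      rw [hgen, Aux.closure_b_eq hdN hd0 hdn, hcar]
      apply Aux.sB_congr hdN hd0
      have heq : j - (0 - ((s:ℕ) : ZMod (2*n))) = j + ((s:ℕ) : ZMod (2*n)) := by ring
      rw [heq]
      apply Nat.dvd_of_mod_eq_zero
      rw [Aux.resAdd hdN j ((s:ℕ) : ZMod (2*n))]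
      have hsval : (((s:ℕ)) : ZMod (2*n)).val = s := by
        apply ZMod.val_cast_of_lt
        have := Nat.le_of_dvd hN hdN
        omega
      have h6 : s % d = s := Nat.mod_eq_of_lt hsd
      rw [hsval, h6]
      exact hsum
  · rintro (⟨t, htN, hto, hH⟩ | ⟨t, s, htN, hto, hs, hH⟩)
    · have ht0 : 0 < t := by
        rcases Nat.eq_zero_or_pos t with h | h
        · subst h; rw [zero_dvd_iff] at htN; omega
        · exact h
      have hm : t * (2*n/t) = 2*n := Nat.mul_div_cancel' htN
      have ht2 : 2 ∣ t := by
        have heven : Even (t * (2*n/t)) := by rw [hm]; exact ⟨n, by ring⟩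
        rcases Nat.even_mul.mp heven with he | he
        · obtain ⟨x, hx⟩ := he; exact ⟨x, by omega⟩
        · obtain ⟨w1, hw1⟩ := hto
          obtain ⟨w2, hw2⟩ := he
          omega
      have hcar : (H : Set (QuaternionGroup n)) = Aux.sA n t := by
        rw [hH]
        exact Aux.closure_a_eq htN ht0
      have hkm : k ≤ 2*n/t := by
        rw [hcard, hcar, Aux.ncard_sA hm ht0] at hk2
        exact hk2
      obtain ⟨S, h1, h2, h3, h4⟩ := Aux.construct_cyclic hm ht2 hto hodd hk1 hkm
      refine ⟨S, h1, h2, ?_, ?_⟩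
      · intro h hh
        apply h3 h
        have h5 : h ∈ (H : Set (QuaternionGroup n)) := hh
        rwa [hcar] at h5
      · intro v hv
        rw [show (H : Set (QuaternionGroup n)) = Aux.sA n t from hcar]
        refine h4 v ?_
        intro hmem
        apply hv
        rw [← SetLike.mem_coe, hcar]
        exact hmem
    · have ht0 : 0 < t := hto.pos
      have htn : t ∣ n := by
        have hcop : Nat.Coprime t 2 := Nat.coprime_two_right.mpr hto
        refine hcop.dvd_of_dvd_mul_right ?_
        rw [mul_comm] at htN
        exact htN
      have hm : t * (2*n/t) = 2*n := Nat.mul_div_cancel' htN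
      have hgen : (QuaternionGroup.a ((s:ℕ) : ZMod (2*n)) * QuaternionGroup.xa 0)
          = QuaternionGroup.xa (0 - ((s:ℕ) : ZMod (2*n))) := by
        rw [QuaternionGroup.a_mul_xa]
      have hcar : (H : Set (QuaternionGroup n)) = Aux.sB n t (0 - ((s:ℕ) : ZMod (2*n))) := by
        rw [hH, hgen]
        exact Aux.closure_b_eq htN ht0 htn _
      have hkm : k ≤ 2*(2*n/t) := by
        rw [hcard, hcar, Aux.ncard_sB hm ht0] at hk2
        exact hk2
      obtain ⟨S, h1, h2, h3, h4⟩ :=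
        Aux.construct_dicyclic hm hto htn hk1 hkm (0 - ((s:ℕ) : ZMod (2*n)))
      refine ⟨S, h1, h2, ?_, ?_⟩
      · intro h hh
        apply h3 h
        have h5 : h ∈ (H : Set (QuaternionGroup n)) := hh
        rwa [hcar] at h5
      · intro v hv
        rw [show (H : Set (QuaternionGroup n))
            = Aux.sB n t (0 - ((s:ℕ) : ZMod (2*n))) from hcar]
        refine h4 v ?_
        intro hmem
        apply hv
        rw [← SetLike.mem_coe, hcar]
        exact hmem
end

section
/- Let p be an odd prime, 1 ≤ t ≤ n−1 and k ≥ 1 with 2n = (p^t − 1)k. Let M be a t×n matrix over F_p of rank t whose multiset of columns consists of k copies each of a set N of (p^t−1)/2 nonzero vectors of F_p^t with the property that for every nonzero u ∈ F_p^t exactly one of u, −u lies in N. Then the null space W = {w ∈ F_p^n : Mw = 0} is a (0,k)-regular set in C_p^{□n}. -/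
open Set

/-- The Cayley graph of an additive group with connection set `S`. -/
def cayleyAdd {A : Type*} [AddGroup A] (S : Set A) : SimpleGraph A where
  Adj x y := x ≠ y ∧ y - x ∈ S ∧ x - y ∈ S
  symm := ⟨fun x y h => ⟨h.1.symm, h.2.2, h.2.1⟩⟩
  loopless := ⟨fun x h => h.1 rfl⟩

/-- The hypercube `Q_n`: the Cayley graph of `ℤ₂ⁿ` with respect to the standard basis. -/
def hypercube (n : ℕ) : SimpleGraph (Fin n → ZMod 2) :=
  cayleyAdd {v | ∃ i, v = Pi.single i 1}

/-- The Cartesian product of `n` copies of the cycle of length `p`: the Cayley graph of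
`ℤ_pⁿ` with connection set `{±eᵢ : 1 ≤ i ≤ n}`. -/
def torus (p n : ℕ) : SimpleGraph (Fin n → ZMod p) :=
  cayleyAdd {v | ∃ i, v = Pi.single i 1 ∨ v = -Pi.single i 1}

theorem stmt19 (p n t k : ℕ) (hp : p.Prime) (hpodd : Odd p)
    (ht1 : 1 ≤ t) (ht2 : t ≤ n - 1) (hk : 1 ≤ k) (hnk : 2 * n = (p ^ t - 1) * k)
    (M : Matrix (Fin t) (Fin n) (ZMod p)) (hrank : M.rank = t)
    (N : Set (Fin t → ZMod p)) (hN0 : (0 : Fin t → ZMod p) ∉ N)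
    (hNcard : N.ncard = (p ^ t - 1) / 2)
    (hNhalf : ∀ u : Fin t → ZMod p, u ≠ 0 → (u ∈ N ↔ -u ∉ N))
    (hcols : ∀ j : Fin n, (fun i => M i j) ∈ N)
    (hmult : ∀ u ∈ N, {j : Fin n | (fun i => M i j) = u}.ncard = k) :
    IsRegularSet (torus p n) {w : Fin n → ZMod p | M.mulVec w = 0} 0 k := by
  haveI : Fact p.Prime := ⟨hp⟩
  haveI : NeZero p := ⟨hp.pos.ne'⟩
  have hMe : ∀ j : Fin n, M.mulVec (Pi.single j (1 : ZMod p)) = fun i => M i j := by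
    intro j; simp; rfl
  have colne : ∀ j : Fin n, (fun i => M i j) ≠ (0 : Fin t → ZMod p) :=
    fun j h => hN0 (h ▸ hcols j)
  have he : ∀ j : Fin n, (Pi.single j (1 : ZMod p) : Fin n → ZMod p) ≠ 0 := by
    intro j h
    have := congrFun h j
    simp at this
  have einj : Function.Injective (fun j : Fin n => Pi.single j (1 : ZMod p)) := by
    intro a b h
    by_contra hab
    have := congrFun h a
    simp [Pi.single_apply, Ne.symm hab] at this
  have hAdj : ∀ v u : Fin n → ZMod p, (torus p n).Adj v u ↔
      (u ≠ v ∧ ∃ j, u - v = Pi.single j 1 ∨ u - v = -Pi.single j 1) := by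
    intro v u
    constructor
    · rintro ⟨h1, h2, _⟩
      exact ⟨Ne.symm h1, h2⟩
    · rintro ⟨h1, j, hj | hj⟩
      · exact ⟨Ne.symm h1, ⟨j, Or.inl hj⟩, ⟨j, Or.inr (by linear_combination -hj)⟩⟩
      · exact ⟨Ne.symm h1, ⟨j, Or.inr hj⟩, ⟨j, Or.inl (by linear_combination -hj)⟩⟩
  refine ⟨⟨0, by simp [Set.mem_setOf_eq, Matrix.mulVec_zero]⟩, ?_, ?_, ?_⟩
  · -- D ≠ univ
    intro h
    have hn2 : 2 ≤ n := by omega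
    have hj0 : M.mulVec (Pi.single (⟨0, by omega⟩ : Fin n) 1) = 0 :=
      (Set.eq_univ_iff_forall.mp h) _
    rw [hMe] at hj0
    exact colne _ hj0
  · -- vertices inside D have 0 neighbours in D
    intro v hv
    have hv0 : M.mulVec v = 0 := hv
    have : {u | (torus p n).Adj v u ∧ u ∈ {w : Fin n → ZMod p | M.mulVec w = 0}} = ∅ := by
      ext u
      simp only [Set.mem_setOf_eq, Set.mem_empty_iff_false, iff_false, not_and]
      intro hadj hu
      obtain ⟨hne, j, hj | hj⟩ := (hAdj v u).mp hadj
      · have hu' : u = v + Pi.single j 1 := by linear_combination hj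
        rw [hu', Matrix.mulVec_add, hv0, hMe, zero_add] at hu
        exact colne j hu
      · have hu' : u = v - Pi.single j 1 := by linear_combination hj
        rw [hu', Matrix.mulVec_sub, hv0, hMe, zero_sub, neg_eq_zero] at hu
        exact colne j hu
    rw [this, Set.ncard_empty]
  · -- vertices outside D have k neighbours in D
    intro v hv
    have hc : M.mulVec v ≠ 0 := hv
    by_cases hcN : M.mulVec v ∈ N
    · -- neighbours are v - e_j for columns j equal to M.mulVec v
      have hneg : -(M.mulVec v) ∉ N := (hNhalf _ hc).mp hcN
      have hset : {u | (torus p n).Adj v u ∧ u ∈ {w : Fin n → ZMod p | M.mulVec w = 0}} =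
          (fun j : Fin n => v - Pi.single j 1) '' {j : Fin n | (fun i => M i j) = M.mulVec v} := by
        ext u
        simp only [Set.mem_setOf_eq, Set.mem_image]
        constructor
        · rintro ⟨hadj, hu⟩
          obtain ⟨hne, j, hj | hj⟩ := (hAdj v u).mp hadj
          · exfalso
            have hu' : u = v + Pi.single j 1 := by linear_combination hj
            rw [hu', Matrix.mulVec_add, hMe] at hu
            have : (fun i => M i j) = -(M.mulVec v) := by linear_combination hu
            exact hneg (this ▸ hcols j)
          · refine ⟨j, ?_, by linear_combination -hj⟩
            have hu' : u = v - Pi.single j 1 := by linear_combination hj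
            rw [hu', Matrix.mulVec_sub, hMe] at hu
            show (fun i => M i j) = M.mulVec v
            linear_combination -hu
        · rintro ⟨j, hj, rfl⟩
          refine ⟨(hAdj _ _).mpr ⟨?_, j, Or.inr (by abel)⟩, ?_⟩
          · intro h
            exact he j (by linear_combination -h)
          · show M.mulVec (v - Pi.single j 1) = 0
            rw [Matrix.mulVec_sub, hMe, hj, sub_self]
      have hinj : Function.Injective (fun j : Fin n => v - Pi.single j 1) := by
        intro a b h
        apply einj
        show (Pi.single a (1 : ZMod p) : Fin n → ZMod p) = Pi.single b 1
        have h' : v - Pi.single a 1 = v - Pi.single b 1 := h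
        linear_combination -h'
      rw [hset, Set.ncard_image_of_injective _ hinj]
      exact hmult _ hcN
    · -- neighbours are v + e_j for columns j equal to -(M.mulVec v)
      have hneg : -(M.mulVec v) ∈ N := not_not.mp (fun h => hcN ((hNhalf _ hc).mpr h))
      have hset : {u | (torus p n).Adj v u ∧ u ∈ {w : Fin n → ZMod p | M.mulVec w = 0}} =
          (fun j : Fin n => v + Pi.single j 1) ''
            {j : Fin n | (fun i => M i j) = -(M.mulVec v)} := by
        ext u
        simp only [Set.mem_setOf_eq, Set.mem_image]
        constructor
        · rintro ⟨hadj, hu⟩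
          obtain ⟨hne, j, hj | hj⟩ := (hAdj v u).mp hadj
          · refine ⟨j, ?_, by linear_combination -hj⟩
            have hu' : u = v + Pi.single j 1 := by linear_combination hj
            rw [hu', Matrix.mulVec_add, hMe] at hu
            show (fun i => M i j) = -(M.mulVec v)
            linear_combination hu
          · exfalso
            have hu' : u = v - Pi.single j 1 := by linear_combination hj
            rw [hu', Matrix.mulVec_sub, hMe] at hu
            have : (fun i => M i j) = M.mulVec v := by linear_combination -hu
            exact hcN (this ▸ hcols j)
        · rintro ⟨j, hj, rfl⟩
          refine ⟨(hAdj _ _).mpr ⟨?_, j, Or.inl (by abel)⟩, ?_⟩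
          · intro h
            exact he j (by linear_combination h)
          · show M.mulVec (v + Pi.single j 1) = 0
            rw [Matrix.mulVec_add, hMe, hj, add_neg_cancel]
      rw [hset, Set.ncard_image_of_injective _
        (fun a b h => einj (by simpa using add_left_cancel h))]
      exact hmult _ hneg
end
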